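/- Let s ≥ 2 and t ≥ 2 be integers, let r be a positive integer, and let n = 3(s−1)·s^{2t}·t^{2t}·r. Then every coloring of the edges of the complete bipartite graph K_{n,n} with r colors contains a monochromatic copy of K_{s,t} or a rainbow copy of K_{s,t}. -/

import Mathlib

/-- The coloring `c` of the edges of `K_{n₁,n₂}` contains a monochromatic copy of `K_{s,t}`
with the `s`-side in the first part and the `t`-side in the second part. -/
def HasMonoKst {n₁ n₂ r : ℕ} (c : Fin n₁ × Fin n₂ → Fin r) (s t : ℕ) : Prop :=
  ∃ (A : Finset (Fin n₁)) (B : Finset (Fin n₂)), A.card = s ∧ B.card = t ∧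
    ∀ a ∈ A, ∀ b ∈ B, ∀ a' ∈ A, ∀ b' ∈ B, c (a, b) = c (a', b')

/-- The coloring `c` of the edges of `K_{n₁,n₂}` contains a rainbow copy of `K_{s,t}`
with the `s`-side in the first part and the `t`-side in the second part. -/
def HasRainbowKst {n₁ n₂ r : ℕ} (c : Fin n₁ × Fin n₂ → Fin r) (s t : ℕ) : Prop :=
  ∃ (A : Finset (Fin n₁)) (B : Finset (Fin n₂)), A.card = s ∧ B.card = t ∧
    ∀ a ∈ A, ∀ b ∈ B, ∀ a' ∈ A, ∀ b' ∈ B, (a, b) ≠ (a', b') → c (a, b) ≠ c (a', b')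

open Finset


lemma counting_lemma (n s t : ℕ) (hs : 1 ≤ s) (H : Finset (Fin n)) (F : Fin n → Finset (Fin n))
    (m : ℕ) (hF : ∀ u ∈ H, m ≤ (F u).card)
    (hcnt : (s - 1) * n ^ t < H.card * (m + 1 - t) ^ t) :
    ∃ (A B : Finset (Fin n)), A.card = s ∧ B.card = t ∧ A ⊆ H ∧ ∀ a ∈ A, B ⊆ F a := by
  classical
  set Emb : Fin n → Finset (Fin t ↪ Fin n) :=
    fun u => Finset.univ.filter (fun e => ∀ i, e i ∈ F u) with hEmbdef
  have hEmb_lower : ∀ u ∈ H, (m + 1 - t) ^ t ≤ (Emb u).card := by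
    intro u hu
    have h0 : (m + 1 - t) ^ t ≤ ((F u).card + 1 - t) ^ t := by
      have hFu := hF u hu
      exact Nat.pow_le_pow_left (by omega) _
    have h1 : ((F u).card + 1 - t) ^ t ≤ (F u).card.descFactorial t :=
      Nat.pow_sub_le_descFactorial _ _
    have h2 : (F u).card.descFactorial t = Fintype.card (Fin t ↪ {x // x ∈ F u}) := by
      rw [Fintype.card_embedding_eq, Fintype.card_coe, Fintype.card_fin]
    have hFu := hF u hu
    have h3 : Fintype.card (Fin t ↪ {x // x ∈ F u}) ≤ (Emb u).card := by
      rw [← Fintype.card_coe (Emb u)]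
      apply Fintype.card_le_of_injective
        (fun e => ⟨e.trans (Function.Embedding.subtype _), by
          simp only [hEmbdef, Finset.mem_filter, Finset.mem_univ, true_and]
          intro i
          exact (e i).2⟩)
      intro e₁ e₂ h
      have h' : e₁.trans (Function.Embedding.subtype _) = e₂.trans (Function.Embedding.subtype _) :=
        congrArg Subtype.val h
      refine DFunLike.coe_injective ?_
      funext i
      exact Subtype.ext (congrArg (fun (f : Fin t ↪ Fin n) => f i) h')
    omega
  set S : Finset ((_ : Fin n) × (Fin t ↪ Fin n)) := H.sigma Emb with hSdef
  have hScard : S.card = ∑ u ∈ H, (Emb u).card := Finset.card_sigma _ _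
  have hSlower : H.card * (m + 1 - t) ^ t ≤ S.card := by
    rw [hScard]
    calc H.card * (m + 1 - t) ^ t = ∑ _u ∈ H, (m + 1 - t) ^ t := by
          rw [Finset.sum_const, smul_eq_mul, mul_comm]
      _ ≤ ∑ u ∈ H, (Emb u).card := Finset.sum_le_sum hEmb_lower
  have hfib : S.card = ∑ e ∈ (Finset.univ : Finset (Fin t ↪ Fin n)),
      (S.filter (fun p => p.2 = e)).card :=
    Finset.card_eq_sum_card_fiberwise (fun p _ => Finset.mem_univ p.2)
  have hbig : ∃ e : Fin t ↪ Fin n, s ≤ (S.filter (fun p => p.2 = e)).card := by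
    by_contra hno
    push_neg at hno
    have hall : ∀ e : Fin t ↪ Fin n, (S.filter (fun p => p.2 = e)).card ≤ s - 1 := by
      intro e; have := hno e; omega
    have : S.card ≤ (Finset.univ : Finset (Fin t ↪ Fin n)).card * (s - 1) := by
      rw [hfib]
      calc ∑ e ∈ Finset.univ, (S.filter (fun p => p.2 = e)).card
          ≤ ∑ _e ∈ (Finset.univ : Finset (Fin t ↪ Fin n)), (s - 1) :=
            Finset.sum_le_sum (fun e _ => hall e)
        _ = (Finset.univ : Finset (Fin t ↪ Fin n)).card * (s - 1) := by
            rw [Finset.sum_const, smul_eq_mul]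
    have hcard_univ : (Finset.univ : Finset (Fin t ↪ Fin n)).card ≤ n ^ t := by
      rw [Finset.card_univ, Fintype.card_embedding_eq, Fintype.card_fin, Fintype.card_fin]
      exact Nat.descFactorial_le_pow _ _
    have hfin : S.card ≤ (s - 1) * n ^ t := by
      calc S.card ≤ (Finset.univ : Finset (Fin t ↪ Fin n)).card * (s - 1) := this
        _ ≤ n ^ t * (s - 1) := Nat.mul_le_mul_right _ hcard_univ
        _ = (s - 1) * n ^ t := Nat.mul_comm _ _
    omega
  obtain ⟨e, he⟩ := hbig
  have hA0 : (S.filter (fun p => p.2 = e)).card ≤ (H.filter (fun u => ∀ i, e i ∈ F u)).card := by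
    apply Finset.card_le_card_of_injOn (fun p => p.1)
    · intro p hp
      simp only [Finset.mem_coe, hSdef, Finset.mem_filter, Finset.mem_sigma, hEmbdef, Finset.mem_univ,
        true_and] at hp ⊢
      obtain ⟨⟨hp1, hp2⟩, hp3⟩ := hp
      exact ⟨hp1, by rw [← hp3]; exact hp2⟩
    · intro p hp q hq hpq
      simp only [Finset.mem_coe, Finset.mem_filter] at hp hq
      obtain ⟨_, hp2⟩ := hp; obtain ⟨_, hq2⟩ := hq
      cases p; cases q
      simp only at hpq hp2 hq2
      subst hpq hp2 hq2
      rfl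
  obtain ⟨A, hAsub, hAcard⟩ := Finset.exists_subset_card_eq (le_trans he hA0)
  refine ⟨A, Finset.univ.map e, hAcard, by
    rw [Finset.card_map, Finset.card_univ, Fintype.card_fin], ?_, ?_⟩
  · exact hAsub.trans (Finset.filter_subset _ _)
  · intro a ha b hb
    rw [Finset.mem_map] at hb
    obtain ⟨i, _, rfl⟩ := hb
    have := hAsub ha
    rw [Finset.mem_filter] at this
    exact this.2 i

lemma mono_rows {n r : ℕ} (c : Fin n × Fin n → Fin r) (s t D : ℕ) (hs : 1 ≤ s) (q : Fin r)
    (hcnt : (s - 1) * n ^ t <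
      ((univ.filter (fun u => D + t ≤ (univ.filter (fun b => c (u, b) = q)).card)).card)
        * (D + 1) ^ t) :
    HasMonoKst c s t := by
  have h1 : D + t + 1 - t = D + 1 := by omega
  obtain ⟨A, B, hA, hB, hAH, hAB⟩ := counting_lemma n s t hs
    (univ.filter (fun u => D + t ≤ (univ.filter (fun b => c (u, b) = q)).card))
    (fun u => univ.filter (fun b => c (u, b) = q)) (D + t)
    (fun u hu => (Finset.mem_filter.mp hu).2) (by rw [h1]; exact hcnt)
  refine ⟨A, B, hA, hB, fun a ha b hb a' ha' b' hb' => ?_⟩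
  have e1 := (Finset.mem_filter.mp (hAB a ha hb)).2
  have e2 := (Finset.mem_filter.mp (hAB a' ha' hb')).2
  rw [e1, e2]

lemma mono_cols {n r : ℕ} (c : Fin n × Fin n → Fin r) (s t D : ℕ) (hs : 1 ≤ s) (q : Fin r)
    (hcnt : (s - 1) * n ^ t <
      ((univ.filter (fun b => D + t ≤ (univ.filter (fun u => c (u, b) = q)).card)).card)
        * (D + 1) ^ t) :
    HasMonoKst c t s := by
  have h1 : D + t + 1 - t = D + 1 := by omega
  obtain ⟨A, B, hA, hB, hAH, hAB⟩ := counting_lemma n s t hs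
    (univ.filter (fun b => D + t ≤ (univ.filter (fun u => c (u, b) = q)).card))
    (fun b => univ.filter (fun u => c (u, b) = q)) (D + t)
    (fun b hb => (Finset.mem_filter.mp hb).2) (by rw [h1]; exact hcnt)
  refine ⟨B, A, hB, hA, fun a ha b hb a' ha' b' hb' => ?_⟩
  have e1 := (Finset.mem_filter.mp (hAB b hb ha)).2
  have e2 := (Finset.mem_filter.mp (hAB b' hb' ha')).2
  rw [e1, e2]

lemma phaseA {n r : ℕ} (c : Fin n × Fin n → Fin r) (t β N : ℕ)
    (GR GC : Finset (Fin n))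
    (hGR : ∀ u ∈ GR, ∀ q : Fin r, (univ.filter (fun b => c (u, b) = q)).card ≤ β)
    (hGRcard : N ≤ GR.card) (hGCcard : N ≤ GC.card)
    (hkey : ∀ j, j < t → n * (j * β) + t * (2 * j * β + 1) < N * (2 * j * β + 1)) :
    ∃ b : Fin t → Fin n, Function.Injective b ∧ (∀ i, b i ∈ GC) ∧
      N ≤ (GR.filter (fun u => Function.Injective fun i => c (u, b i))).card + β * (t * (t - 1)) := by
  classical
  suffices h : ∀ j, j ≤ t → ∃ b : Fin j → Fin n, Function.Injective b ∧ (∀ i, b i ∈ GC) ∧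
      N ≤ (GR.filter (fun u => Function.Injective fun i => c (u, b i))).card + β * (j * (j - 1)) by
    exact h t le_rfl
  intro j
  induction j with
  | zero =>
    intro _
    refine ⟨Fin.elim0, fun x => x.elim0, fun i => i.elim0, ?_⟩
    have : (GR.filter (fun u => Function.Injective fun i : Fin 0 => c (u, Fin.elim0 i))) = GR := by
      apply Finset.filter_true_of_mem
      intro u _ i
      exact fun i' _ => i.elim0
    rw [this]
    omega
  | succ j ih =>
    intro hj1
    obtain ⟨b, hbinj, hbGC, hbcard⟩ := ih (Nat.le_of_succ_le hj1)
    have hjt : j < t := hj1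
    set RS := GR.filter (fun u => Function.Injective fun i => c (u, b i)) with hRSdef
    set GC' := GC.filter (fun b' => ∀ i, b i ≠ b') with hGC'def
    have hRSGR : RS ⊆ GR := Finset.filter_subset _ _
    have hRSn : RS.card ≤ n := by
      have := Finset.card_le_univ RS
      simpa using this
    have hGC' : N ≤ GC'.card + t := by
      have hsplit := Finset.card_filter_add_card_filter_not
        (s := GC) (p := fun b' => ∀ i, b i ≠ b')
      rw [← hGC'def] at hsplit
      have hneg : (GC.filter (fun b' => ¬ ∀ i, b i ≠ b')).card ≤ j := by
        have hsub : GC.filter (fun b' => ¬ ∀ i, b i ≠ b') ⊆ (univ : Finset (Fin j)).image b := by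
          intro x hx
          rw [Finset.mem_filter] at hx
          push_neg at hx
          obtain ⟨i, hi⟩ := hx.2
          exact Finset.mem_image.mpr ⟨i, Finset.mem_univ _, hi⟩
        calc (GC.filter (fun b' => ¬ ∀ i, b i ≠ b')).card ≤ ((univ : Finset (Fin j)).image b).card :=
              Finset.card_le_card hsub
          _ ≤ (univ : Finset (Fin j)).card := Finset.card_image_le
          _ = j := by simp
      have := hGCcard
      omega
    -- averaging: find a good new column
    have havg : ∃ b' ∈ GC', ((RS.filter (fun u => ∃ i, c (u, b') = c (u, b i))).card ≤ 2 * j * β) := by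
      by_contra hno
      push_neg at hno
      set X := 2 * j * β + 1 with hXdef
      have hall : ∀ b' ∈ GC', X ≤ (RS.filter (fun u => ∃ i, c (u, b') = c (u, b i))).card := by
        intro b' hb'
        have := hno b' hb'
        omega
      have hlow : GC'.card * X ≤
          ∑ b' ∈ GC', (RS.filter (fun u => ∃ i, c (u, b') = c (u, b i))).card := by
        have := Finset.card_nsmul_le_sum GC'
          (fun b' => (RS.filter (fun u => ∃ i, c (u, b') = c (u, b i))).card) X hall
        simpa [smul_eq_mul] using this
      have hup : ∑ b' ∈ GC', (RS.filter (fun u => ∃ i, c (u, b') = c (u, b i))).card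
          ≤ n * (j * β) := by
        have step1 : ∀ b' ∈ GC', (RS.filter (fun u => ∃ i, c (u, b') = c (u, b i))).card
            ≤ ∑ i ∈ (univ : Finset (Fin j)), (RS.filter (fun u => c (u, b') = c (u, b i))).card := by
          intro b' _
          have hsub : RS.filter (fun u => ∃ i, c (u, b') = c (u, b i)) ⊆
              (univ : Finset (Fin j)).biUnion (fun i => RS.filter (fun u => c (u, b') = c (u, b i))) := by
            intro u hu
            rw [Finset.mem_filter] at hu
            obtain ⟨hu1, i, hi⟩ := hu
            exact Finset.mem_biUnion.mpr ⟨i, Finset.mem_univ _, Finset.mem_filter.mpr ⟨hu1, hi⟩⟩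
          exact le_trans (Finset.card_le_card hsub) (Finset.card_biUnion_le)
        have swap : ∀ i : Fin j, ∑ b' ∈ GC', (RS.filter (fun u => c (u, b') = c (u, b i))).card
            = ∑ u ∈ RS, (GC'.filter (fun b' => c (u, b') = c (u, b i))).card := by
          intro i
          simp_rw [Finset.card_filter]
          exact Finset.sum_comm
        have inner : ∀ i : Fin j, ∑ u ∈ RS, (GC'.filter (fun b' => c (u, b') = c (u, b i))).card
            ≤ RS.card * β := by
          intro i
          have : ∀ u ∈ RS, (GC'.filter (fun b' => c (u, b') = c (u, b i))).card ≤ β := by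
            intro u hu
            have hsub : GC'.filter (fun b' => c (u, b') = c (u, b i)) ⊆
                univ.filter (fun b' => c (u, b') = c (u, b i)) := by
              apply Finset.filter_subset_filter
              exact Finset.subset_univ _
            exact le_trans (Finset.card_le_card hsub) (hGR u (hRSGR hu) (c (u, b i)))
          calc ∑ u ∈ RS, (GC'.filter (fun b' => c (u, b') = c (u, b i))).card
              ≤ ∑ _u ∈ RS, β := Finset.sum_le_sum this
            _ = RS.card * β := by rw [Finset.sum_const, smul_eq_mul]
        calc ∑ b' ∈ GC', (RS.filter (fun u => ∃ i, c (u, b') = c (u, b i))).card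
            ≤ ∑ b' ∈ GC', ∑ i ∈ (univ : Finset (Fin j)),
                (RS.filter (fun u => c (u, b') = c (u, b i))).card := Finset.sum_le_sum step1
          _ = ∑ i ∈ (univ : Finset (Fin j)), ∑ b' ∈ GC',
                (RS.filter (fun u => c (u, b') = c (u, b i))).card := Finset.sum_comm
          _ ≤ ∑ i ∈ (univ : Finset (Fin j)), RS.card * β := by
              apply Finset.sum_le_sum
              intro i _
              rw [swap i]
              exact inner i
          _ = j * (RS.card * β) := by rw [Finset.sum_const, smul_eq_mul]; simp
          _ ≤ j * (n * β) := Nat.mul_le_mul_left _ (Nat.mul_le_mul_right _ hRSn)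
          _ = n * (j * β) := by ring
      -- contradiction
      have hcontr : N * X ≤ n * (j * β) + t * X := by
        calc N * X ≤ (GC'.card + t) * X := Nat.mul_le_mul_right _ hGC'
          _ = GC'.card * X + t * X := by ring
          _ ≤ n * (j * β) + t * X := by
              have := le_trans hlow hup
              omega
      have hk := hkey j hjt
      rw [← hXdef] at hk
      omega
    obtain ⟨b', hb'GC', hb'loss⟩ := havg
    have hb'GC : b' ∈ GC := (Finset.mem_filter.mp hb'GC').1
    have hb'new : ∀ i, b i ≠ b' := (Finset.mem_filter.mp hb'GC').2
    refine ⟨Fin.snoc b b', ?_, ?_, ?_⟩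
    · -- injective
      intro i₁ i₂ h
      induction i₁ using Fin.lastCases with
      | last =>
        induction i₂ using Fin.lastCases with
        | last => rfl
        | cast k =>
          rw [Fin.snoc_last, Fin.snoc_castSucc] at h
          exact absurd h.symm (hb'new k)
      | cast k₁ =>
        induction i₂ using Fin.lastCases with
        | last =>
          rw [Fin.snoc_last, Fin.snoc_castSucc] at h
          exact absurd h (hb'new k₁)
        | cast k₂ =>
          rw [Fin.snoc_castSucc, Fin.snoc_castSucc] at h
          exact congrArg Fin.castSucc (hbinj h)
    · -- in GC
      intro i
      induction i using Fin.lastCases with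
      | last => rw [Fin.snoc_last]; exact hb'GC
      | cast k => rw [Fin.snoc_castSucc]; exact hbGC k
    · -- cardinality
      set lossSet := RS.filter (fun u => ∃ i, c (u, b') = c (u, b i)) with hlossdef
      have hsub : RS \ lossSet ⊆
          GR.filter (fun u => Function.Injective fun i => c (u, (Fin.snoc b b' : Fin (j+1) → Fin n) i)) := by
        intro u hu
        rw [Finset.mem_sdiff] at hu
        obtain ⟨huRS, hunotloss⟩ := hu
        have huGR : u ∈ GR := hRSGR huRS
        have huinj : Function.Injective fun i => c (u, b i) := (Finset.mem_filter.mp huRS).2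
        have hnotex : ¬ ∃ i, c (u, b') = c (u, b i) := by
          intro hex
          exact hunotloss (Finset.mem_filter.mpr ⟨huRS, hex⟩)
        push_neg at hnotex
        rw [Finset.mem_filter]
        refine ⟨huGR, ?_⟩
        intro i₁ i₂ h
        simp only at h
        induction i₁ using Fin.lastCases with
        | last =>
          induction i₂ using Fin.lastCases with
          | last => rfl
          | cast k =>
            rw [Fin.snoc_last, Fin.snoc_castSucc] at h
            exact absurd h (hnotex k)
        | cast k₁ =>
          induction i₂ using Fin.lastCases with
          | last =>
            rw [Fin.snoc_last, Fin.snoc_castSucc] at h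
            exact absurd h.symm (hnotex k₁)
          | cast k₂ =>
            rw [Fin.snoc_castSucc, Fin.snoc_castSucc] at h
            exact congrArg Fin.castSucc (huinj h)
      have hcard1 : RS.card - 2 * j * β ≤
          (GR.filter (fun u => Function.Injective fun i => c (u, (Fin.snoc b b' : Fin (j+1) → Fin n) i))).card := by
        have h1 : (RS \ lossSet).card = RS.card - lossSet.card :=
          Finset.card_sdiff_of_subset (Finset.filter_subset _ _)
        have h2 := Finset.card_le_card hsub
        omega
      have hexp : β * ((j+1) * ((j+1) - 1)) = β * (j * (j-1)) + 2 * j * β := by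
        cases j with
        | zero => simp
        | succ m =>
          simp only [Nat.add_sub_cancel, Nat.succ_sub_one]
          ring
      omega

lemma phaseB {n r : ℕ} (c : Fin n × Fin n → Fin r) (s t β : ℕ) (ht : 1 ≤ t)
    (b : Fin t → Fin n) (R : Finset (Fin n))
    (hcol : ∀ (k : Fin t) (q : Fin r), (univ.filter (fun u => c (u, b k) = q)).card ≤ β)
    (hR : (s - 1) * (t * t * β) + 1 ≤ R.card) :
    ∃ p : Fin s → Fin n, (∀ k, p k ∈ R) ∧
      ∀ k k', k ≠ k' → ∀ k₁ k₂, c (p k, b k₁) ≠ c (p k', b k₂) := by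
  classical
  suffices h : ∀ i, i ≤ s → ∃ p : Fin i → Fin n, (∀ k, p k ∈ R) ∧
      (∀ k k', k ≠ k' → ∀ k₁ k₂, c (p k, b k₁) ≠ c (p k', b k₂)) ∧
      R.card ≤ (R.filter (fun u' => ∀ k k₁ k₂, c (u', b k₁) ≠ c (p k, b k₂))).card
        + i * (t * t * β) by
    obtain ⟨p, h1, h2, _⟩ := h s le_rfl
    exact ⟨p, h1, h2⟩
  intro i
  induction i with
  | zero =>
    intro _
    refine ⟨Fin.elim0, fun k => k.elim0, fun k => k.elim0, ?_⟩
    have : (R.filter (fun u' => ∀ (k : Fin 0) k₁ k₂, c (u', b k₁) ≠ c (Fin.elim0 k, b k₂))) = R :=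
      Finset.filter_true_of_mem (fun u _ k => k.elim0)
    rw [this]
    omega
  | succ i ih =>
    intro hi1
    obtain ⟨p, hpR, hpdisj, hpcard⟩ := ih (Nat.le_of_succ_le hi1)
    set Rem := R.filter (fun u' => ∀ k k₁ k₂, c (u', b k₁) ≠ c (p k, b k₂)) with hRemdef
    have hRemne : Rem.Nonempty := by
      rw [← Finset.card_pos]
      have hiT : i * (t * t * β) ≤ (s - 1) * (t * t * β) :=
        Nat.mul_le_mul_right _ (by omega)
      omega
    obtain ⟨u, hu⟩ := hRemne
    have huR : u ∈ R := (Finset.mem_filter.mp hu).1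
    have huOK : ∀ k k₁ k₂, c (u, b k₁) ≠ c (p k, b k₂) := (Finset.mem_filter.mp hu).2
    refine ⟨Fin.snoc p u, ?_, ?_, ?_⟩
    · intro k
      induction k using Fin.lastCases with
      | last => rw [Fin.snoc_last]; exact huR
      | cast k => rw [Fin.snoc_castSucc]; exact hpR k
    · intro k k' hkk' k₁ k₂
      induction k using Fin.lastCases with
      | last =>
        induction k' using Fin.lastCases with
        | last => exact absurd rfl hkk'
        | cast m =>
          rw [Fin.snoc_last, Fin.snoc_castSucc]
          exact huOK m k₁ k₂
      | cast m =>
        induction k' using Fin.lastCases with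
        | last =>
          rw [Fin.snoc_last, Fin.snoc_castSucc]
          exact fun h => (huOK m k₂ k₁) h.symm
        | cast m' =>
          rw [Fin.snoc_castSucc, Fin.snoc_castSucc]
          exact hpdisj m m' (fun h => hkk' (congrArg Fin.castSucc h)) k₁ k₂
    · -- cardinality
      set bad := Rem.filter (fun u' => ∃ k₁ k₂, c (u', b k₁) = c (u, b k₂)) with hbaddef
      have hbad : bad.card ≤ t * t * β := by
        have hsub : bad ⊆ (univ : Finset (Fin t × Fin t)).biUnion
            (fun kk => univ.filter (fun u' => c (u', b kk.1) = c (u, b kk.2))) := by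
          intro x hx
          rw [hbaddef, Finset.mem_filter] at hx
          obtain ⟨_, k₁, k₂, hk⟩ := hx
          exact Finset.mem_biUnion.mpr ⟨(k₁, k₂), Finset.mem_univ _,
            Finset.mem_filter.mpr ⟨Finset.mem_univ _, hk⟩⟩
        calc bad.card ≤ ∑ kk ∈ (univ : Finset (Fin t × Fin t)),
              (univ.filter (fun u' => c (u', b kk.1) = c (u, b kk.2))).card :=
            le_trans (Finset.card_le_card hsub) Finset.card_biUnion_le
          _ ≤ ∑ _kk ∈ (univ : Finset (Fin t × Fin t)), β :=
            Finset.sum_le_sum (fun kk _ => hcol kk.1 (c (u, b kk.2)))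
          _ = t * t * β := by
            rw [Finset.sum_const, smul_eq_mul, Finset.card_univ, Fintype.card_prod,
              Fintype.card_fin]
      have hsub2 : Rem \ bad ⊆ R.filter (fun u' => ∀ k k₁ k₂,
          c (u', b k₁) ≠ c ((Fin.snoc p u : Fin (i+1) → Fin n) k, b k₂)) := by
        intro x hx
        rw [Finset.mem_sdiff] at hx
        obtain ⟨hx1, hx2⟩ := hx
        have hx1R : x ∈ R := (Finset.mem_filter.mp hx1).1
        have hx1OK := (Finset.mem_filter.mp hx1).2
        have hnot : ¬ ∃ k₁ k₂, c (x, b k₁) = c (u, b k₂) := fun hex =>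
          hx2 (Finset.mem_filter.mpr ⟨hx1, hex⟩)
        push_neg at hnot
        rw [Finset.mem_filter]
        refine ⟨hx1R, ?_⟩
        intro k k₁ k₂
        induction k using Fin.lastCases with
        | last => rw [Fin.snoc_last]; exact hnot k₁ k₂
        | cast m => rw [Fin.snoc_castSucc]; exact hx1OK m k₁ k₂
      have h1 : (Rem \ bad).card = Rem.card - bad.card :=
        Finset.card_sdiff_of_subset (Finset.filter_subset _ _)
      have h2 := Finset.card_le_card hsub2
      have hexp : (i+1) * (t*t*β) = i * (t*t*β) + t*t*β := by ring
      omega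

theorem BGR_arith_e5 {s t P : ℕ} (hs : 2 ≤ s) (ht : 2 ≤ t) (hP : s^4*t^4 ≤ P) :
    s*s*t*t*t + s ≤ P := by
  have q1 : s ≤ s*s*t*t*t := by
    calc s = s*1 := (mul_one s).symm
      _ ≤ s*(s*t*t*t) := Nat.mul_le_mul_left s (by
          have h : 0 < s*t*t*t := by positivity
          omega)
      _ = s*s*t*t*t := by ring
  have h8 : 2 ≤ s*s*t := by
    have := Nat.mul_le_mul (Nat.mul_le_mul hs hs) ht
    omega
  have q2 : 2*(s*s*t*t*t) ≤ s^4*t^4 := by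
    calc 2*(s*s*t*t*t) ≤ (s*s*t)*(s*s*t*t*t) := Nat.mul_le_mul_right _ h8
      _ = s^4*t^4 := by ring
  omega


/-- For integers `s, t ≥ 2`, a positive integer `r`, and `n = 3(s-1)·s^(2t)·t^(2t)·r`,
every `r`-coloring of `K_{n,n}` contains a monochromatic or rainbow copy of `K_{s,t}`
(in either orientation). -/
theorem bipartite_gallai_ramsey_explicit (s t r n : ℕ) (hs : 2 ≤ s) (ht : 2 ≤ t) (hr : 0 < r)
    (hn : n = 3 * (s - 1) * s ^ (2 * t) * t ^ (2 * t) * r)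
    (c : Fin n × Fin n → Fin r) :
    (HasMonoKst c s t ∨ HasMonoKst c t s) ∨
    (HasRainbowKst c s t ∨ HasRainbowKst c t s) := by
  classical
  set K := (s - 1) * (s^2*t^2)^t with hKdef
  set D := 3 * (s - 1) * (s^2*t^2)^(t-1) * r with hDdef
  have hpow : (s^2*t^2)^t = s^(2*t) * t^(2*t) := by
    rw [mul_pow, ← pow_mul, ← pow_mul]
  have hpow2 : s^2*t^2*(s^2*t^2)^(t-1) = (s^2*t^2)^t := by
    have ht1 : t - 1 + 1 = t := by omega
    calc s^2*t^2*(s^2*t^2)^(t-1) = (s^2*t^2)^(t-1+1) := by rw [pow_succ]; ring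
      _ = (s^2*t^2)^t := by rw [ht1]
  have hn2 : n = s^2*t^2*D := by
    rw [hn, hDdef]
    calc 3*(s-1)*s^(2*t)*t^(2*t)*r = 3*(s-1)*((s^2*t^2)^t)*r := by rw [hpow]; ring
      _ = 3*(s-1)*(s^2*t^2*(s^2*t^2)^(t-1))*r := by rw [hpow2]
      _ = s^2*t^2*(3*(s-1)*(s^2*t^2)^(t-1)*r) := by ring
  have hn3 : n = 3*(K*r) := by
    rw [hn, hKdef, hpow]; ring
  have hP : s^4*t^4 ≤ K*r := by
    have h1 : (s^2*t^2)^2 ≤ (s^2*t^2)^t := by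
      apply Nat.pow_le_pow_right
      · positivity
      · exact ht
    calc s^4*t^4 = (s^2*t^2)^2 := by ring
      _ ≤ (s^2*t^2)^t := h1
      _ ≤ (s-1)*(s^2*t^2)^t := Nat.le_mul_of_pos_left _ (by omega)
      _ = K := hKdef.symm
      _ ≤ K*r := Nat.le_mul_of_pos_right _ hr
  have hKrt : 2*t ≤ K*r := by
    have h1 : 2*t ≤ s^4*t := Nat.mul_le_mul_right t (by
      calc 2 ≤ 2^4 := by norm_num
        _ ≤ s^4 := Nat.pow_le_pow_left hs 4)
    have h2 : s^4*t ≤ s^4*t^4 := Nat.mul_le_mul_left _ (Nat.le_self_pow (by omega) t)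
    omega
  have hD1 : 1 ≤ D := by
    rw [hDdef]
    have h1 : 0 < (s^2*t^2)^(t-1) := by positivity
    have : 0 < 3 * (s-1) * (s^2*t^2)^(t-1) * r := by
      apply Nat.mul_pos (Nat.mul_pos (by omega) h1) hr
    omega
  set β := D + t - 1 with hβdef
  have hβ1 : β + 1 = D + t := by omega
  -- heavy rows
  by_cases hrow : ∃ q : Fin r, K + 1 ≤
      ((univ.filter (fun u => D + t ≤ (univ.filter (fun b => c (u, b) = q)).card)).card)
  · obtain ⟨q, hq⟩ := hrow
    refine Or.inl (Or.inl (mono_rows c s t D (by omega) q ?_))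
    have hnt : n^t = (s^2*t^2)^t * D^t := by rw [hn2, mul_pow]
    have hDp : 0 < (D+1)^t := Nat.pow_pos (by omega)
    calc (s-1)*n^t = K * D^t := by rw [hnt, hKdef]; ring
      _ ≤ K * (D+1)^t := Nat.mul_le_mul_left _ (Nat.pow_le_pow_left (by omega) t)
      _ < (K+1) * (D+1)^t := (Nat.mul_lt_mul_right hDp).mpr (Nat.lt_succ_self K)
      _ ≤ _ := Nat.mul_le_mul_right _ hq
  by_cases hcol : ∃ q : Fin r, K + 1 ≤
      ((univ.filter (fun b => D + t ≤ (univ.filter (fun u => c (u, b) = q)).card)).card)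
  · obtain ⟨q, hq⟩ := hcol
    refine Or.inl (Or.inr (mono_cols c s t D (by omega) q ?_))
    have hnt : n^t = (s^2*t^2)^t * D^t := by rw [hn2, mul_pow]
    have hDp : 0 < (D+1)^t := Nat.pow_pos (by omega)
    calc (s-1)*n^t = K * D^t := by rw [hnt, hKdef]; ring
      _ ≤ K * (D+1)^t := Nat.mul_le_mul_left _ (Nat.pow_le_pow_left (by omega) t)
      _ < (K+1) * (D+1)^t := (Nat.mul_lt_mul_right hDp).mpr (Nat.lt_succ_self K)
      _ ≤ _ := Nat.mul_le_mul_right _ hq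
  push_neg at hrow hcol
  -- good rows and columns
  set GR := univ.filter (fun u : Fin n => ∀ q : Fin r,
    (univ.filter (fun b => c (u, b) = q)).card ≤ β) with hGRdef
  set GC := univ.filter (fun b : Fin n => ∀ q : Fin r,
    (univ.filter (fun u => c (u, b) = q)).card ≤ β) with hGCdef
  have hGRprop : ∀ u ∈ GR, ∀ q : Fin r, (univ.filter (fun b => c (u, b) = q)).card ≤ β :=
    fun u hu => (Finset.mem_filter.mp hu).2
  have hGCprop : ∀ b ∈ GC, ∀ q : Fin r, (univ.filter (fun u => c (u, b) = q)).card ≤ β :=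
    fun b hb => (Finset.mem_filter.mp hb).2
  have hGRcard : 2*(K*r) ≤ GR.card := by
    have hsplit := Finset.card_filter_add_card_filter_not
      (s := (univ : Finset (Fin n))) (p := fun u : Fin n => ∀ q : Fin r,
        (univ.filter (fun b => c (u, b) = q)).card ≤ β)
    rw [← hGRdef] at hsplit
    have hbadsub : univ.filter (fun u : Fin n => ¬ ∀ q : Fin r,
        (univ.filter (fun b => c (u, b) = q)).card ≤ β) ⊆
        (univ : Finset (Fin r)).biUnion (fun q =>
          univ.filter (fun u => D + t ≤ (univ.filter (fun b => c (u, b) = q)).card)) := by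
      intro u hu
      rw [Finset.mem_filter] at hu
      obtain ⟨-, hu2⟩ := hu
      push_neg at hu2
      obtain ⟨q, hq⟩ := hu2
      refine Finset.mem_biUnion.mpr ⟨q, Finset.mem_univ _, Finset.mem_filter.mpr
        ⟨Finset.mem_univ _, by omega⟩⟩
    have hbad : (univ.filter (fun u : Fin n => ¬ ∀ q : Fin r,
        (univ.filter (fun b => c (u, b) = q)).card ≤ β)).card ≤ r * K := by
      calc _ ≤ ((univ : Finset (Fin r)).biUnion (fun q =>
            univ.filter (fun u => D + t ≤ (univ.filter (fun b => c (u, b) = q)).card))).card :=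
          Finset.card_le_card hbadsub
        _ ≤ ∑ q ∈ (univ : Finset (Fin r)),
            (univ.filter (fun u => D + t ≤ (univ.filter (fun b => c (u, b) = q)).card)).card :=
          Finset.card_biUnion_le
        _ ≤ (univ : Finset (Fin r)).card • K :=
          Finset.sum_le_card_nsmul _ _ K (fun q _ => by have := hrow q; omega)
        _ = r * K := by simp [smul_eq_mul]
    have huniv : (univ : Finset (Fin n)).card = 3*(K*r) := by
      rw [Finset.card_fin]; exact hn3
    have hcomm : r * K = K * r := Nat.mul_comm r K
    omega
  have hGCcard : 2*(K*r) ≤ GC.card := by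
    have hsplit := Finset.card_filter_add_card_filter_not
      (s := (univ : Finset (Fin n))) (p := fun b : Fin n => ∀ q : Fin r,
        (univ.filter (fun u => c (u, b) = q)).card ≤ β)
    rw [← hGCdef] at hsplit
    have hbadsub : univ.filter (fun b : Fin n => ¬ ∀ q : Fin r,
        (univ.filter (fun u => c (u, b) = q)).card ≤ β) ⊆
        (univ : Finset (Fin r)).biUnion (fun q =>
          univ.filter (fun b => D + t ≤ (univ.filter (fun u => c (u, b) = q)).card)) := by
      intro b hb
      rw [Finset.mem_filter] at hb
      obtain ⟨-, hb2⟩ := hb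
      push_neg at hb2
      obtain ⟨q, hq⟩ := hb2
      refine Finset.mem_biUnion.mpr ⟨q, Finset.mem_univ _, Finset.mem_filter.mpr
        ⟨Finset.mem_univ _, by omega⟩⟩
    have hbad : (univ.filter (fun b : Fin n => ¬ ∀ q : Fin r,
        (univ.filter (fun u => c (u, b) = q)).card ≤ β)).card ≤ r * K := by
      calc _ ≤ ((univ : Finset (Fin r)).biUnion (fun q =>
            univ.filter (fun b => D + t ≤ (univ.filter (fun u => c (u, b) = q)).card))).card :=
          Finset.card_le_card hbadsub
        _ ≤ ∑ q ∈ (univ : Finset (Fin r)),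
            (univ.filter (fun b => D + t ≤ (univ.filter (fun u => c (u, b) = q)).card)).card :=
          Finset.card_biUnion_le
        _ ≤ (univ : Finset (Fin r)).card • K :=
          Finset.sum_le_card_nsmul _ _ K (fun q _ => by have := hcol q; omega)
        _ = r * K := by simp [smul_eq_mul]
    have huniv : (univ : Finset (Fin n)).card = 3*(K*r) := by
      rw [Finset.card_fin]; exact hn3
    have hcomm : r * K = K * r := Nat.mul_comm r K
    omega
  -- key averaging inequality
  have hkey : ∀ j, j < t → n * (j * β) + t * (2 * j * β + 1) < (2*(K*r)) * (2 * j * β + 1) := by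
    intro j hj
    have h1 : 2*(t*(j*β)) ≤ (K*r)*(j*β) := by
      calc 2*(t*(j*β)) = (2*t)*(j*β) := by ring
        _ ≤ (K*r)*(j*β) := Nat.mul_le_mul_right _ hKrt
    have h2 : t < 2*(K*r) := by omega
    have e1 : n*(j*β) = 3*((K*r)*(j*β)) := by rw [hn3]; ring
    have e2 : (2*(K*r))*(2*j*β+1) = 4*((K*r)*(j*β)) + 2*(K*r) := by ring
    have e3 : t*(2*j*β+1) = 2*(t*(j*β)) + t := by ring
    omega
  obtain ⟨b, hbinj, hbGC, hbound⟩ := phaseA c t β (2*(K*r)) GR GC hGRprop hGRcard hGCcard hkey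
  -- arithmetic for phase B precondition
  have hDK : s^2*t^2*D = 3*(K*r) := by rw [← hn2]; exact hn3
  have hF3 : (s-1)*(t*t*β) + 1 + β*(t*(t-1)) ≤ 2*(K*r) := by
    have hstep1 : β*(t*(t-1)) ≤ β*(t*t) :=
      Nat.mul_le_mul_left _ (Nat.mul_le_mul_left _ (by omega))
    have hstep2 : (s-1)*(t*t*β) + β*(t*t) = s*(t*t*β) := by
      have h1 : (s-1)*(t*t*β) + β*(t*t) = ((s-1)+1)*(t*t*β) := by ring
      rw [h1]
      congr 1
      omega
    have hsuff : s*(t*t*β) + 1 ≤ 2*(K*r) := by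
      have h0 : 0 < s := by omega
      apply Nat.le_of_mul_le_mul_left _ h0
      have e1 : s*(s*(t*t*β)+1) = (s*s*t*t)*β + s := by ring
      have e2 : (s*s*t*t)*β ≤ (s*s*t*t)*(D+t) := Nat.mul_le_mul_left _ (by omega)
      have e3 : (s*s*t*t)*(D+t) = s^2*t^2*D + s*s*t*t*t := by ring
      have e5 : s*s*t*t*t + s ≤ K*r := BGR_arith_e5 hs ht hP
      have e6 : 4*(K*r) ≤ s*(2*(K*r)) := by
        have : 4*(K*r) ≤ (2*s)*(K*r) := Nat.mul_le_mul_right _ (by omega)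
        calc 4*(K*r) ≤ (2*s)*(K*r) := this
          _ = s*(2*(K*r)) := by ring
      omega
    omega
  set RS := GR.filter (fun u => Function.Injective fun i => c (u, b i)) with hRSdef
  have hRScard : (s-1)*(t*t*β) + 1 ≤ RS.card := by omega
  have hcolb : ∀ (k : Fin t) (q : Fin r), (univ.filter (fun u => c (u, b k) = q)).card ≤ β :=
    fun k q => hGCprop (b k) (hbGC k) q
  obtain ⟨p, hpR, hpdisj⟩ := phaseB c s t β (by omega) b RS hcolb hRScard
  -- assemble the rainbow copy
  have hpinj : Function.Injective p := by
    intro k k' h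
    by_contra hne
    exact hpdisj k k' hne ⟨0, by omega⟩ ⟨0, by omega⟩ (by rw [h])
  have hrowinj : ∀ k, Function.Injective fun i => c (p k, b i) :=
    fun k => (Finset.mem_filter.mp (hpR k)).2
  refine Or.inr (Or.inl ⟨univ.image p, univ.image b, ?_, ?_, ?_⟩)
  · rw [Finset.card_image_of_injective _ hpinj, Finset.card_univ, Fintype.card_fin]
  · rw [Finset.card_image_of_injective _ hbinj, Finset.card_univ, Fintype.card_fin]
  · intro a ha bb hbb a' ha' bb' hbb' hne
    obtain ⟨k, -, rfl⟩ := Finset.mem_image.mp ha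
    obtain ⟨k₁, -, rfl⟩ := Finset.mem_image.mp hbb
    obtain ⟨k', -, rfl⟩ := Finset.mem_image.mp ha'
    obtain ⟨k₂, -, rfl⟩ := Finset.mem_image.mp hbb'
    by_cases hk : k = k'
    · subst hk
      intro hcc
      have : k₁ = k₂ := hrowinj k hcc
      subst this
      exact hne rfl
    · exact hpdisj k k' hk k₁ k₂
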